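/- Let Ω be a finite probability space with a filtration F₀ ⊆ … ⊆ F_n of partitions. For each i ∈ [n] let Y_i be an F_i-measurable Bernoulli random variable and p_i an F_{i−1}-measurable real random variable. Let x ∈ ℝ and δ ∈ (0, 3/2), and set X = Y₁ + … + Y_n. If almost surely Σ p_i ≥ x and E[Y_i | F_{i−1}] ≥ p_i for all i, then P(X < (1−δ)x) < e^{−δ²x/3}. -/

import Mathlib

open MeasureTheory

/-- Quadratic upper bound for `exp (-a)` when `a ≥ 0`. -/
lemma exp_neg_le_quadratic {a : ℝ} (ha : 0 ≤ a) :
    Real.exp (-a) ≤ 1 - a + a ^ 2 / 2 := by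
  have h := Real.quadratic_le_exp_of_nonneg ha
  have hpos : (0 : ℝ) < 1 + a + a ^ 2 / 2 := by positivity
  calc Real.exp (-a) = (Real.exp a)⁻¹ := Real.exp_neg a
    _ ≤ (1 + a + a ^ 2 / 2)⁻¹ := inv_anti₀ hpos h
    _ ≤ 1 - a + a ^ 2 / 2 := by
        rw [inv_eq_one_div, div_le_iff₀ hpos]
        nlinarith [pow_nonneg ha 4]

/-- Every measurable function on a finite space with a finite measure is integrable. -/
lemma integrable_of_fintype' {Ω : Type*} [Fintype Ω] {m0 : MeasurableSpace Ω}
    (μ : Measure Ω) [IsFiniteMeasure μ] (f : Ω → ℝ) (hf : Measurable f) :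
    Integrable f μ := by
  obtain ⟨C, hC⟩ := Finite.exists_le fun ω => ‖f ω‖
  exact ⟨hf.aestronglyMeasurable,
    HasFiniteIntegral.of_bounded (C := C) (Filter.Eventually.of_forall hC)⟩

/-- Sequential concentration inequality (Lemma 2.2 in ABHKP16). -/
theorem sequential_concentration {Ω : Type*} [Fintype Ω] {m0 : MeasurableSpace Ω}
    (μ : Measure Ω) [IsProbabilityMeasure μ]
    (n : ℕ) (F : ℕ → MeasurableSpace Ω) (hF_le : ∀ i, F i ≤ m0) (hF_mono : Monotone F)
    (Y : ℕ → Ω → ℝ) (p : ℕ → Ω → ℝ)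
    (hY01 : ∀ i ∈ Finset.Icc 1 n, ∀ ω, Y i ω = 0 ∨ Y i ω = 1)
    (hYmeas : ∀ i ∈ Finset.Icc 1 n, Measurable[F i] (Y i))
    (hpmeas : ∀ i ∈ Finset.Icc 1 n, Measurable[F (i - 1)] (p i))
    (x δ : ℝ) (hδ : δ ∈ Set.Ioo (0 : ℝ) (3 / 2))
    (hsum : ∀ᵐ ω ∂μ, x ≤ ∑ i ∈ Finset.Icc 1 n, p i ω)
    (hcond : ∀ i ∈ Finset.Icc 1 n, ∀ᵐ ω ∂μ, p i ω ≤ (μ[Y i | F (i - 1)]) ω) :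
    (μ {ω | ∑ i ∈ Finset.Icc 1 n, Y i ω < (1 - δ) * x}).toReal
      < Real.exp (-δ ^ 2 * x / 3) := by
  obtain ⟨hδ0, hδ32⟩ := hδ
  -- measurability of the various functions w.r.t. m0
  have hYm0 : ∀ i ∈ Finset.Icc 1 n, Measurable[m0] (Y i) :=
    fun i hi => (hYmeas i hi).mono (hF_le i) le_rfl
  have hpm0 : ∀ i ∈ Finset.Icc 1 n, Measurable[m0] (p i) :=
    fun i hi => (hpmeas i hi).mono (hF_le (i - 1)) le_rfl
  have hAmeas : MeasurableSet[m0] {ω | ∑ i ∈ Finset.Icc 1 n, Y i ω < (1 - δ) * x} := by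
    exact measurableSet_lt (Finset.measurable_sum _ hYm0) measurable_const
  rcases le_or_gt x 0 with hx | hx
  · rcases lt_or_eq_of_le hx with hx' | hx'
    · -- x < 0 : the RHS exceeds 1
      have h1 : (μ {ω | ∑ i ∈ Finset.Icc 1 n, Y i ω < (1 - δ) * x}).toReal ≤ 1 := by
        have := ENNReal.toReal_mono (a := μ {ω | ∑ i ∈ Finset.Icc 1 n, Y i ω < (1 - δ) * x})
          (b := 1) ENNReal.one_ne_top prob_le_one
        simpa using this
      have h2 : (1 : ℝ) < Real.exp (-δ ^ 2 * x / 3) := by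
        rw [← Real.exp_zero]
        apply Real.exp_lt_exp.2
        have : 0 < δ ^ 2 := by positivity
        nlinarith
      linarith
    · -- x = 0 : the event is empty since the Yᵢ are nonnegative
      subst hx'
      have hempty : {ω | ∑ i ∈ Finset.Icc 1 n, Y i ω < (1 - δ) * 0} = ∅ := by
        ext ω
        simp only [Set.mem_setOf_eq, Set.mem_empty_iff_false, iff_false, not_lt, mul_zero]
        exact Finset.sum_nonneg fun i hi => by rcases hY01 i hi ω with h | h <;> simp [h]
      rw [hempty]
      simpa using Real.exp_pos (-δ ^ 2 * 0 / 3)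
  -- main case : x > 0
  set s : ℝ := 1 - Real.exp (-δ) with hs_def
  have hs0 : 0 < s := by
    have : Real.exp (-δ) < 1 := Real.exp_lt_one_iff.2 (by linarith)
    simp only [hs_def]; linarith
  have hs1 : s < 1 := by
    have := Real.exp_pos (-δ); simp only [hs_def]; linarith
  -- the supermartingale
  set g : ℕ → Ω → ℝ := fun k ω => Real.exp (∑ i ∈ Finset.Icc 1 k, (s * p i ω - δ * Y i ω))
    with hg_def
  have hg_nonneg : ∀ k ω, 0 ≤ g k ω := fun k ω => (Real.exp_pos _).le
  have hg_meas : ∀ k, k ≤ n → Measurable[F k] (g k) := by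
    intro k hk
    apply Measurable.comp (f := fun ω => ∑ i ∈ Finset.Icc 1 k, (s * p i ω - δ * Y i ω))
      Real.measurable_exp
    apply Finset.measurable_sum
    intro i hi
    rw [Finset.mem_Icc] at hi
    have hin : i ∈ Finset.Icc 1 n := Finset.mem_Icc.2 ⟨hi.1, hi.2.trans hk⟩
    have h1 : Measurable[F k] (p i) :=
      (hpmeas i hin).mono (hF_mono (by omega : i - 1 ≤ k)) le_rfl
    have h2 : Measurable[F k] (Y i) :=
      (hYmeas i hin).mono (hF_mono hi.2) le_rfl
    exact (h1.const_mul s).sub (h2.const_mul δ)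
  have hg_meas0 : ∀ k, k ≤ n → Measurable[m0] (g k) :=
    fun k hk => (hg_meas k hk).mono (hF_le k) le_rfl
  -- key supermartingale estimate : ∫ g k ≤ 1 for all k ≤ n
  have key : ∀ k, k ≤ n → ∫ ω, g k ω ∂μ ≤ 1 := by
    intro k
    induction k with
    | zero =>
      intro _
      simp [hg_def]
    | succ k ih =>
      intro hk
      have hk' : k ≤ n := by omega
      have hik : k + 1 ∈ Finset.Icc 1 n := Finset.mem_Icc.2 ⟨by omega, hk⟩
      have hm : F k ≤ m0 := hF_le k
      -- decomposition g (k+1) = W * (1 - s * Y (k+1))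
      set W : Ω → ℝ := fun ω => g k ω * Real.exp (s * p (k + 1) ω) with hW_def
      have hpk : Measurable[F k] (p (k + 1)) := hpmeas (k + 1) hik
      have hW_meas : Measurable[F k] W :=
        (hg_meas k hk').mul (Real.measurable_exp.comp (hpk.const_mul s))
      have hW_meas0 : Measurable[m0] W := hW_meas.mono hm le_rfl
      have hW_nonneg : ∀ ω, 0 ≤ W ω :=
        fun ω => mul_nonneg (hg_nonneg k ω) (Real.exp_pos _).le
      have hYk0 : Measurable[m0] (Y (k + 1)) := hYm0 _ hik
      have hIcc : Finset.Icc 1 (k + 1) = insert (k + 1) (Finset.Icc 1 k) := by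
        ext i; simp only [Finset.mem_Icc, Finset.mem_insert]; omega
      have hnotmem : k + 1 ∉ Finset.Icc 1 k := by simp
      have hdecomp : ∀ ω, g (k + 1) ω = W ω * (1 - s * Y (k + 1) ω) := by
        intro ω
        have hexpY : Real.exp (-(δ * Y (k + 1) ω)) = 1 - s * Y (k + 1) ω := by
          rcases hY01 (k + 1) hik ω with h | h <;> simp [h, hs_def] <;> ring
        simp only [hg_def, hW_def, hIcc, Finset.sum_insert hnotmem]
        rw [sub_eq_add_neg (s * p (k + 1) ω), add_comm (s * p (k + 1) ω + _),
          Real.exp_add, Real.exp_add, hexpY]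
        ring
      set h : Ω → ℝ := fun ω => 1 - s * Y (k + 1) ω with hh_def
      have hh_meas0 : Measurable[m0] h := (hYk0.const_mul s).const_sub 1
      have hh_int : Integrable h μ := integrable_of_fintype' μ h hh_meas0
      have hWh_int : Integrable (W * h) μ :=
        integrable_of_fintype' μ _ (hW_meas0.mul hh_meas0)
      have hYint : Integrable (Y (k + 1)) μ := integrable_of_fintype' μ _ hYk0
      -- conditional expectation of h
      have hcexp_h : μ[h | F k] =ᵐ[μ] fun ω => 1 - s * (μ[Y (k + 1) | F k]) ω := by
        have heq : h = (fun _ => (1 : ℝ)) - s • Y (k + 1) := by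
          funext ω; simp [hh_def, smul_eq_mul]
        rw [heq]
        have h1 := condExp_sub (m := F k) (μ := μ) (integrable_const (1 : ℝ))
          (hYint.smul s)
        have h2 := condExp_smul (m := F k) (m₀ := m0) (μ := μ) s (Y (k + 1))
        have h3 : μ[(fun _ => (1 : ℝ)) | F k] = fun _ => (1 : ℝ) := condExp_const hm 1
        filter_upwards [h1, h2] with ω hω1 hω2
        simp only [Pi.sub_apply] at hω1 ⊢
        rw [hω1, h3, hω2]
        simp [smul_eq_mul]
      -- pull-out property
      have hpull : μ[W * h | F k] =ᵐ[μ] W * μ[h | F k] :=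
        condExp_mul_of_stronglyMeasurable_left hW_meas.stronglyMeasurable hWh_int hh_int
      -- the pointwise supermartingale bound, a.e.
      have hae : μ[W * h | F k] ≤ᵐ[μ] g k := by
        have hc := hcond (k + 1) hik
        filter_upwards [hpull, hcexp_h, hc] with ω h1 h2 h3
        simp only [Nat.add_sub_cancel] at h3
        rw [h1]
        simp only [Pi.mul_apply]
        rw [h2]
        have step1 : 1 - s * (μ[Y (k + 1) | F k]) ω ≤ 1 - s * p (k + 1) ω := by
          have := mul_le_mul_of_nonneg_left h3 hs0.le
          linarith
        have step2 : W ω * (1 - s * (μ[Y (k + 1) | F k]) ω) ≤ W ω * (1 - s * p (k + 1) ω) :=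
          mul_le_mul_of_nonneg_left step1 (hW_nonneg ω)
        refine step2.trans ?_
        -- W ω * (1 - s p) = g k ω * (exp(s p)(1 - s p)) ≤ g k ω
        have hb : 1 - s * p (k + 1) ω ≤ Real.exp (-(s * p (k + 1) ω)) := by
          have := Real.add_one_le_exp (-(s * p (k + 1) ω)); linarith
        have : Real.exp (s * p (k + 1) ω) * (1 - s * p (k + 1) ω) ≤ 1 := by
          calc Real.exp (s * p (k + 1) ω) * (1 - s * p (k + 1) ω)
              ≤ Real.exp (s * p (k + 1) ω) * Real.exp (-(s * p (k + 1) ω)) :=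
                mul_le_mul_of_nonneg_left hb (Real.exp_pos _).le
            _ = 1 := by rw [← Real.exp_add]; simp
        calc W ω * (1 - s * p (k + 1) ω)
            = g k ω * (Real.exp (s * p (k + 1) ω) * (1 - s * p (k + 1) ω)) := by
              simp only [hW_def]; ring
          _ ≤ g k ω * 1 := mul_le_mul_of_nonneg_left this (hg_nonneg k ω)
          _ = g k ω := mul_one _
      -- put it together
      have hgk_int : Integrable (g k) μ := integrable_of_fintype' μ _ (hg_meas0 k hk')
      calc ∫ ω, g (k + 1) ω ∂μ = ∫ ω, (W * h) ω ∂μ := by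
            apply integral_congr_ae
            filter_upwards with ω
            simp only [Pi.mul_apply, hh_def]
            exact hdecomp ω
        _ = ∫ ω, (μ[W * h | F k]) ω ∂μ := (integral_condExp hm (f := W * h)).symm
        _ ≤ ∫ ω, g k ω ∂μ := integral_mono_ae integrable_condExp hgk_int hae
        _ ≤ 1 := ih hk'
  -- Markov / Chernoff step
  set A : Set Ω := {ω | ∑ i ∈ Finset.Icc 1 n, Y i ω < (1 - δ) * x} with hA_def
  set c : ℝ := Real.exp (s * x - δ * ((1 - δ) * x)) with hc_def
  have hc_pos : 0 < c := Real.exp_pos _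
  have hind : ∀ᵐ ω ∂μ, A.indicator (fun _ => c) ω ≤ g n ω := by
    filter_upwards [hsum] with ω hω
    by_cases hA : ω ∈ A
    · rw [Set.indicator_of_mem hA]
      have hsplit : ∑ i ∈ Finset.Icc 1 n, (s * p i ω - δ * Y i ω)
          = s * (∑ i ∈ Finset.Icc 1 n, p i ω) - δ * (∑ i ∈ Finset.Icc 1 n, Y i ω) := by
        rw [Finset.sum_sub_distrib, Finset.mul_sum, Finset.mul_sum]
      have hYlt : ∑ i ∈ Finset.Icc 1 n, Y i ω < (1 - δ) * x := hA
      have harg : s * x - δ * ((1 - δ) * x)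
          ≤ ∑ i ∈ Finset.Icc 1 n, (s * p i ω - δ * Y i ω) := by
        rw [hsplit]
        have h1 : s * x ≤ s * ∑ i ∈ Finset.Icc 1 n, p i ω :=
          mul_le_mul_of_nonneg_left hω hs0.le
        have h2 : δ * (∑ i ∈ Finset.Icc 1 n, Y i ω) ≤ δ * ((1 - δ) * x) :=
          mul_le_mul_of_nonneg_left hYlt.le hδ0.le
        linarith
      exact Real.exp_le_exp.2 harg
    · rw [Set.indicator_of_notMem hA]
      exact hg_nonneg n ω
  have hgn_int : Integrable (g n) μ := integrable_of_fintype' μ _ (hg_meas0 n le_rfl)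
  have hind_int : Integrable (A.indicator fun _ => c) μ :=
    (integrable_const c).indicator hAmeas
  have hmarkov : (μ A).toReal * c ≤ 1 := by
    have h1 : ∫ ω, A.indicator (fun _ => c) ω ∂μ ≤ ∫ ω, g n ω ∂μ :=
      integral_mono_ae hind_int hgn_int hind
    have h2 : ∫ ω, A.indicator (fun _ => c) ω ∂μ = (μ A).toReal * c := by
      rw [integral_indicator_const c hAmeas]; simp [smul_eq_mul, Measure.real]
    linarith [key n le_rfl]
  have hμA : (μ A).toReal ≤ Real.exp (δ * ((1 - δ) * x) - s * x) := by
    have hle : (μ A).toReal ≤ 1 / c := by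
      rw [le_div_iff₀ hc_pos]; linarith
    calc (μ A).toReal ≤ 1 / c := hle
      _ = Real.exp (δ * ((1 - δ) * x) - s * x) := by
          rw [hc_def, one_div, ← Real.exp_neg]; ring_nf
  refine lt_of_le_of_lt hμA ?_
  apply Real.exp_lt_exp.2
  -- δ(1-δ)x - sx < -δ²x/3, using exp(-δ) ≤ 1 - δ + δ²/2
  have hq : Real.exp (-δ) ≤ 1 - δ + δ ^ 2 / 2 := exp_neg_le_quadratic hδ0.le
  have hs_lb : δ - δ ^ 2 / 2 ≤ s := by simp only [hs_def]; linarith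
  have hδ2x : 0 < δ ^ 2 * x := by positivity
  nlinarith [mul_le_mul_of_nonneg_right hs_lb hx.le, mul_pos (mul_pos hδ0 hδ0) hx]
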